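/- Let G be a graph state on N qubits with quadratic phase polynomial p(x) over 𝔽₂, and let c₁ be a vertex with neighborhood {b₁,…,b_n}. Then the local Clifford operator LC(c₁) = √(−iX_{c₁}) ∏_{j=1}^n √(iZ_{b_j}) maps |G⟩ to (up to global phase) the graph state whose phase polynomial is p(x) + ∑_{j<k} x_{b_j} x_{b_k} multiplied by the additional local phases ∏_j Z_{b_j}; i.e., LC(c₁)|G⟩ = (global phase) · (∏_{j=1}^n Z_{b_j}) |G'⟩ where G' is the local complement of G at c₁. -/

import Mathlib

open Matrix

noncomputable section

/-- Local complementation of a simple graph at a vertex `a`. -/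
def lc {V : Type*} (G : SimpleGraph V) (a : V) : SimpleGraph V where
  Adj b c := b ≠ c ∧ Xor (G.Adj b c) (G.Adj a b ∧ G.Adj a c)
  symm := by
    constructor
    intro b c h
    obtain ⟨hne, hx⟩ := h
    refine ⟨hne.symm, ?_⟩
    rw [G.adj_comm c b, and_comm]
    exact hx
  loopless := by
    constructor
    intro b h
    exact h.1 rfl

instance {V : Type*} (G : SimpleGraph V) (a : V) [DecidableEq V]
    [DecidableRel G.Adj] : DecidableRel (lc G a).Adj := fun b c =>
  inferInstanceAs (Decidable (b ≠ c ∧ Xor (G.Adj b c) (G.Adj a b ∧ G.Adj a c)))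

/-- The quadratic phase polynomial `p(x) = ∑_{{i,j}∈E} x_i x_j` of a graph. -/
def phasePoly {V : Type*} [Fintype V] [DecidableEq V] (G : SimpleGraph V)
    [DecidableRel G.Adj] (x : V → Fin 2) : ℕ :=
  ∑ e ∈ G.edgeFinset,
    Sym2.lift ⟨fun i j => (x i).val * (x j).val, fun _ _ => mul_comm _ _⟩ e

/-- The graph state `|G⟩ = 2^{−N/2} ∑_x (−1)^{p(x)} |x⟩`. -/
def gs {V : Type*} [Fintype V] [DecidableEq V] (G : SimpleGraph V)
    [DecidableRel G.Adj] : (V → Fin 2) → ℂ :=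
  fun x => ((1 / Real.sqrt 2 : ℝ) : ℂ) ^ (Fintype.card V) * (-1) ^ phasePoly G x

/-- `√(−iX) = (−I + iX)/√2` acting on qubit `c` (identity elsewhere). -/
def sqrtNegIXGate {V : Type*} [Fintype V] [DecidableEq V] (c : V) :
    Matrix (V → Fin 2) (V → Fin 2) ℂ :=
  fun x y => if ∀ i, i ≠ c → x i = y i
    then (if x c = y c then (-1 : ℂ) else Complex.I) * ((1 / Real.sqrt 2 : ℝ) : ℂ)
    else 0

set_option linter.unusedSectionVars false

namespace LCH

variable {V : Type*} [Fintype V] [DecidableEq V]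

/-- term of an edge -/
def tm (x : V → Fin 2) : Sym2 V → ℕ :=
  Sym2.lift ⟨fun i j => (x i).val * (x j).val, fun _ _ => mul_comm _ _⟩

@[simp] lemma tm_mk (x : V → Fin 2) (b c : V) : tm x s(b, c) = (x b).val * (x c).val := rfl

/-- extended edge factor -/
def FF (H : SimpleGraph V) [DecidableRel H.Adj] (x : V → Fin 2) (e : Sym2 V) : ℂ :=
  if e ∈ H.edgeFinset then (-1 : ℂ) ^ tm x e else 1

lemma pow_phasePoly_eq_prod (H : SimpleGraph V) [DecidableRel H.Adj] (x : V → Fin 2) :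
    ((-1 : ℂ)) ^ phasePoly H x = ∏ e : Sym2 V, FF H x e := by
  rw [phasePoly, ← Finset.prod_pow_eq_pow_sum]
  rw [show (∏ e : Sym2 V, FF H x e) = ∏ e ∈ Finset.univ ∩ H.edgeFinset, (-1 : ℂ) ^ tm x e by
    rw [← Finset.prod_ite_mem]; rfl]
  rw [Finset.univ_inter]
  rfl

/-- the flip at c₁ -/
def fl (c₁ : V) (x : V → Fin 2) : V → Fin 2 := Function.update x c₁ (x c₁ + 1)

lemma fl_apply_ne (c₁ : V) (x : V → Fin 2) {b : V} (hb : b ≠ c₁) : fl c₁ x b = x b :=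
  Function.update_of_ne hb _ x

@[simp] lemma fl_apply_self (c₁ : V) (x : V → Fin 2) : fl c₁ x c₁ = x c₁ + 1 :=
  Function.update_self _ _ _

def nn (G : SimpleGraph V) [DecidableRel G.Adj] (c₁ : V) (x : V → Fin 2) : ℕ :=
  ∑ b ∈ G.neighborFinset c₁, (x b).val

variable (G : SimpleGraph V) [DecidableRel G.Adj] (c₁ : V) (x : V → Fin 2)

/-- the correction factor for the flip -/
def KA : Sym2 V → ℂ :=
  Sym2.lift ⟨fun b c => if G.Adj b c then
      (-1 : ℂ) ^ ((if b = c₁ then (x c).val else 0) + (if c = c₁ then (x b).val else 0))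
    else 1, by
    intro b c
    dsimp only
    by_cases h : G.Adj b c
    · rw [if_pos h, if_pos h.symm, add_comm]
    · rw [if_neg h, if_neg (fun h' => h h'.symm)]⟩

lemma pow_flip_aux (a b : Fin 2) :
    ((-1 : ℂ)) ^ (((a + 1) : Fin 2).val * b.val)
      = (-1 : ℂ) ^ (a.val * b.val) * (-1 : ℂ) ^ (b.val) := by
  fin_cases a <;> fin_cases b <;> simp [Fin.val_add]

lemma FF_flip (e : Sym2 V) : FF G (fl c₁ x) e = FF G x e * KA G c₁ x e := by
  induction e using Sym2.ind with
  | _ b c =>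
    simp only [FF, KA, Sym2.lift_mk, tm_mk]
    by_cases hbc : G.Adj b c
    · have hmem : s(b, c) ∈ G.edgeFinset := by
        simpa [SimpleGraph.mem_edgeFinset] using hbc
      rw [if_pos hmem, if_pos hmem, if_pos hbc]
      have hne : b ≠ c := hbc.ne
      by_cases hb : b = c₁
      · subst hb
        have hc : ¬ c = b := fun h => hne h.symm
        rw [if_pos rfl, if_neg hc, fl_apply_self, fl_apply_ne _ _ (fun h => hne h.symm)]
        rw [pow_flip_aux, add_zero]
      · by_cases hc : c = c₁
        · subst hc
          rw [if_neg hb, if_pos rfl, fl_apply_self, fl_apply_ne _ _ hb]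
          rw [mul_comm ((x b).val), mul_comm ((x b).val), pow_flip_aux, zero_add]
        · rw [if_neg hb, if_neg hc, fl_apply_ne _ _ hb, fl_apply_ne _ _ hc]
          simp
    · have hmem : s(b, c) ∉ G.edgeFinset := by
        simpa [SimpleGraph.mem_edgeFinset] using hbc
      rw [if_neg hmem, if_neg hmem, if_neg hbc, one_mul]

lemma prod_KA : (∏ e : Sym2 V, KA G c₁ x e) = (-1 : ℂ) ^ (nn G c₁ x) := by
  have hsub : (G.neighborFinset c₁).image (fun d => s(c₁, d)) ⊆ Finset.univ :=
    Finset.subset_univ _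
  have hone : ∀ e ∈ Finset.univ, e ∉ (G.neighborFinset c₁).image (fun d => s(c₁, d)) →
      KA G c₁ x e = 1 := by
    intro e _
    induction e using Sym2.ind with
    | _ b c =>
      intro he
      simp only [KA, Sym2.lift_mk]
      by_cases hbc : G.Adj b c
      · rw [if_pos hbc]
        by_cases hb : b = c₁
        · exfalso
          apply he
          subst hb
          exact Finset.mem_image.mpr ⟨c, (SimpleGraph.mem_neighborFinset G b c).mpr hbc, rfl⟩
        · by_cases hc : c = c₁
          · exfalso
            apply he
            subst hc
            refine Finset.mem_image.mpr
              ⟨b, (SimpleGraph.mem_neighborFinset G c b).mpr hbc.symm, ?_⟩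
            exact Sym2.eq_swap
          · rw [if_neg hb, if_neg hc]
            norm_num
      · rw [if_neg hbc]
  rw [← Finset.prod_subset hsub hone]
  rw [Finset.prod_image (by
    intro d1 h1 d2 h2 h
    rcases Sym2.eq_iff.mp h with ⟨_, h⟩ | ⟨h', h''⟩
    · exact h
    · exfalso
      exact ((SimpleGraph.mem_neighborFinset G c₁ d1).mp h1).ne' h'')]
  have : ∀ d ∈ G.neighborFinset c₁, KA G c₁ x s(c₁, d) = (-1 : ℂ) ^ ((x d).val) := by
    intro d hd
    have hadj : G.Adj c₁ d := (SimpleGraph.mem_neighborFinset G c₁ d).mp hd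
    simp only [KA, Sym2.lift_mk]
    simp [hadj, hadj.ne']
  rw [Finset.prod_congr rfl this, Finset.prod_pow_eq_pow_sum]
  rfl

/-- pair factor on a finset -/
def KBs (x : V → Fin 2) (s : Finset V) : Sym2 V → ℂ :=
  Sym2.lift ⟨fun b c => if b ≠ c ∧ b ∈ s ∧ c ∈ s then (-1 : ℂ) ^ ((x b).val * (x c).val) else 1, by
    intro b c
    dsimp only
    have hiff : (b ≠ c ∧ b ∈ s ∧ c ∈ s) ↔ (c ≠ b ∧ c ∈ s ∧ b ∈ s) := by
      constructor <;> rintro ⟨h1, h2, h3⟩ <;> exact ⟨h1.symm, h3, h2⟩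
    rw [if_congr hiff rfl rfl, mul_comm ((x b).val)]⟩

/-- new pairs added when inserting `a` -/
def KD (x : V → Fin 2) (a : V) (s : Finset V) : Sym2 V → ℂ :=
  Sym2.lift ⟨fun b c => if (b = a ∧ c ∈ s) ∨ (c = a ∧ b ∈ s) then
      (-1 : ℂ) ^ ((x b).val * (x c).val) else 1, by
    intro b c
    dsimp only
    rw [if_congr or_comm rfl rfl, mul_comm ((x b).val)]⟩

lemma KBs_insert (x : V → Fin 2) (a : V) (s : Finset V) (ha : a ∉ s) (e : Sym2 V) :
    KBs x (insert a s) e = KBs x s e * KD x a s e := by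
  induction e using Sym2.ind with
  | _ b c =>
    simp only [KBs, KD, Sym2.lift_mk, Finset.mem_insert]
    by_cases h2 : b ≠ c ∧ b ∈ s ∧ c ∈ s
    · have h3 : ¬ ((b = a ∧ c ∈ s) ∨ (c = a ∧ b ∈ s)) := by
        rintro (⟨rfl, -⟩ | ⟨rfl, -⟩) <;> exact ha (by tauto)
      have h1 : b ≠ c ∧ (b = a ∨ b ∈ s) ∧ (c = a ∨ c ∈ s) := by tauto
      rw [if_pos h1, if_pos h2, if_neg h3, mul_one]
    · by_cases h3 : (b = a ∧ c ∈ s) ∨ (c = a ∧ b ∈ s)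
      · have hbc : b ≠ c := by
          rintro rfl
          rcases h3 with ⟨rfl, h⟩ | ⟨rfl, h⟩ <;> exact ha h
        have h1 : b ≠ c ∧ (b = a ∨ b ∈ s) ∧ (c = a ∨ c ∈ s) := by tauto
        rw [if_pos h1, if_neg h2, if_pos h3, one_mul]
      · have h1 : ¬ (b ≠ c ∧ (b = a ∨ b ∈ s) ∧ (c = a ∨ c ∈ s)) := by
          rintro ⟨hbc, hb | hb, hc | hc⟩
          · exact hbc (hb.trans hc.symm)
          · exact h3 (Or.inl ⟨hb, hc⟩)
          · exact h3 (Or.inr ⟨hc, hb⟩)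
          · exact h2 ⟨hbc, hb, hc⟩
        rw [if_neg h1, if_neg h2, if_neg h3, one_mul]

lemma prod_KD (x : V → Fin 2) (a : V) (s : Finset V) (ha : a ∉ s) :
    (∏ e : Sym2 V, KD x a s e) = (-1 : ℂ) ^ ((x a).val * ∑ b ∈ s, (x b).val) := by
  have hone : ∀ e ∈ Finset.univ, e ∉ s.image (fun d => s(a, d)) → KD x a s e = 1 := by
    intro e _
    induction e using Sym2.ind with
    | _ b c =>
      intro he
      simp only [KD, Sym2.lift_mk]
      rw [if_neg]
      rintro (⟨rfl, hc⟩ | ⟨rfl, hb⟩)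
      · exact he (Finset.mem_image.mpr ⟨c, hc, rfl⟩)
      · exact he (Finset.mem_image.mpr ⟨b, hb, Sym2.eq_swap⟩)
  rw [← Finset.prod_subset (Finset.subset_univ _) hone]
  rw [Finset.prod_image (by
    intro d1 h1 d2 h2 h
    rcases Sym2.eq_iff.mp h with ⟨-, h⟩ | ⟨h', h''⟩
    · exact h
    · exact absurd h'.symm (fun hh => ha (hh ▸ h2)))]
  have hval : ∀ d ∈ s, KD x a s s(a, d) = (-1 : ℂ) ^ ((x a).val * (x d).val) := by
    intro d hd
    simp [KD, hd]
  rw [Finset.prod_congr rfl hval, Finset.prod_pow_eq_pow_sum, Finset.mul_sum]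

lemma prod_KBs (x : V → Fin 2) (s : Finset V) :
    (∏ e : Sym2 V, KBs x s e) * Complex.I ^ (∑ b ∈ s, (x b).val)
      = Complex.I ^ ((∑ b ∈ s, (x b).val) * (∑ b ∈ s, (x b).val)) := by
  induction s using Finset.induction_on with
  | empty =>
    have h1 : ∀ e : Sym2 V, KBs x ∅ e = 1 := by
      intro e
      induction e using Sym2.ind with
      | _ b c => simp [KBs]
    simp [h1]
  | @insert a s ha ih =>
    have hsum : ∑ b ∈ insert a s, (x b).val = (x a).val + ∑ b ∈ s, (x b).val :=
      Finset.sum_insert ha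
    have hprod : (∏ e : Sym2 V, KBs x (insert a s) e)
        = (∏ e : Sym2 V, KBs x s e) * (-1 : ℂ) ^ ((x a).val * ∑ b ∈ s, (x b).val) := by
      rw [Finset.prod_congr rfl (fun e _ => KBs_insert x a s ha e), Finset.prod_mul_distrib,
        prod_KD x a s ha]
    rw [hsum, hprod]
    have hu : (x a).val = 0 ∨ (x a).val = 1 := by have := (x a).isLt; omega
    set q := ∑ b ∈ s, (x b).val with hq
    rcases hu with hu | hu
    · rw [hu]
      simpa using ih
    · rw [hu, one_mul]
      have e0 : (1 + q) * (1 + q) = q * q + (2 * q + 1) := by ring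
      rw [e0, pow_add Complex.I (q * q) (2 * q + 1), ← ih]
      have e1 : Complex.I ^ (2 * q + 1) = (-1 : ℂ) ^ q * Complex.I := by
        rw [pow_add, pow_mul, Complex.I_sq, pow_one]
      have e2 : Complex.I ^ (1 + q) = Complex.I * Complex.I ^ q := by
        rw [pow_add, pow_one]
      rw [e1, e2]
      ring

lemma lc_adj (a b c : V) : (lc G a).Adj b c ↔ b ≠ c ∧ Xor (G.Adj b c) (G.Adj a b ∧ G.Adj a c) :=
  Iff.rfl

lemma FF_lc (e : Sym2 V) :
    FF (lc G c₁) x e = FF G x e * KBs x (G.neighborFinset c₁) e := by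
  induction e using Sym2.ind with
  | _ b c =>
    simp only [FF, KBs, Sym2.lift_mk, tm_mk, SimpleGraph.mem_edgeFinset,
      SimpleGraph.mem_edgeSet, SimpleGraph.mem_neighborFinset, lc_adj]
    by_cases hbc : b = c
    · subst hbc
      simp [G.irrefl]
    · by_cases hA : G.Adj b c
      · by_cases hN : G.Adj c₁ b ∧ G.Adj c₁ c
        · rw [if_neg (fun h => h.2.elim (fun h' => h'.2 hN) (fun h' => h'.2 hA)),
            if_pos hA, if_pos ⟨hbc, hN⟩, ← pow_add]
          exact (Even.neg_one_pow ⟨_, rfl⟩).symm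
        · rw [if_pos ⟨hbc, Or.inl ⟨hA, hN⟩⟩, if_pos hA, if_neg (fun h => hN h.2), mul_one]
      · by_cases hN : G.Adj c₁ b ∧ G.Adj c₁ c
        · rw [if_pos ⟨hbc, Or.inr ⟨hN, hA⟩⟩, if_neg hA, if_pos ⟨hbc, hN⟩, one_mul]
        · rw [if_neg (fun h => h.2.elim (fun h' => hA h'.1) (fun h' => hN h'.1)),
            if_neg hA, if_neg (fun h => hN h.2), mul_one]

lemma key_lc :
    ((-1 : ℂ)) ^ phasePoly (lc G c₁) x * Complex.I ^ (nn G c₁ x)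
      = ((-1 : ℂ)) ^ phasePoly G x * Complex.I ^ (nn G c₁ x * nn G c₁ x) := by
  rw [pow_phasePoly_eq_prod, pow_phasePoly_eq_prod,
    Finset.prod_congr rfl (fun e _ => FF_lc G c₁ x e), Finset.prod_mul_distrib, mul_assoc]
  congr 1
  exact prod_KBs x (G.neighborFinset c₁)

lemma key_flip :
    ((-1 : ℂ)) ^ phasePoly G (fl c₁ x)
      = ((-1 : ℂ)) ^ phasePoly G x * (-1 : ℂ) ^ (nn G c₁ x) := by
  rw [pow_phasePoly_eq_prod, pow_phasePoly_eq_prod,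
    Finset.prod_congr rfl (fun e _ => FF_flip G c₁ x e), Finset.prod_mul_distrib, prod_KA]

lemma nn_fl : nn G c₁ (fl c₁ x) = nn G c₁ x :=
  Finset.sum_congr rfl fun b hb => by
    rw [fl_apply_ne _ _ ((SimpleGraph.mem_neighborFinset G c₁ b).mp hb).ne']

lemma prod_d :
    (∏ b ∈ G.neighborFinset c₁,
        ((Complex.I + (-1 : ℂ) ^ ((x b).val)) * ((1 / Real.sqrt 2 : ℝ) : ℂ)))
      = ((1 + Complex.I) * ((1 / Real.sqrt 2 : ℝ) : ℂ)) ^ ((G.neighborFinset c₁).card)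
        * Complex.I ^ (nn G c₁ x) := by
  have hfac : ∀ b : V,
      (Complex.I + (-1 : ℂ) ^ ((x b).val)) * ((1 / Real.sqrt 2 : ℝ) : ℂ)
        = ((1 + Complex.I) * ((1 / Real.sqrt 2 : ℝ) : ℂ)) * Complex.I ^ ((x b).val) := by
    intro b
    have hu : (x b).val = 0 ∨ (x b).val = 1 := by have := (x b).isLt; omega
    rcases hu with hu | hu
    · rw [hu, pow_zero, pow_zero]
      ring
    · rw [hu, pow_one, pow_one]
      linear_combination (-((1 / Real.sqrt 2 : ℝ) : ℂ)) * Complex.I_sq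
  rw [Finset.prod_congr rfl (fun b _ => hfac b), Finset.prod_mul_distrib, Finset.prod_const,
    Finset.prod_pow_eq_pow_sum]
  rfl

lemma fin2_flip_eq {a b : Fin 2} (h : ¬ a = b) : b = a + 1 := by
  fin_cases a <;> fin_cases b <;> simp_all <;> rfl

lemma fin2_succ_ne (a : Fin 2) : ¬ a = a + 1 := by
  fin_cases a <;> decide

lemma gate_row (c₁ : V) (x y : V → Fin 2) :
    sqrtNegIXGate c₁ x y
      = (if y = x then (-1 : ℂ) * ((1 / Real.sqrt 2 : ℝ) : ℂ) else 0)
        + (if y = fl c₁ x then Complex.I * ((1 / Real.sqrt 2 : ℝ) : ℂ) else 0) := by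
  rw [sqrtNegIXGate]
  by_cases h : ∀ i, i ≠ c₁ → x i = y i
  · rw [if_pos h]
    by_cases hc : x c₁ = y c₁
    · have hyx : y = x := by
        funext i
        by_cases hi : i = c₁
        · subst hi; exact hc.symm
        · exact (h i hi).symm
      subst hyx
      have hnf : ¬ y = fl c₁ y := by
        intro hy
        have h2 := congrFun hy c₁
        rw [fl_apply_self] at h2
        exact fin2_succ_ne (y c₁) h2
      rw [if_pos hc, if_pos rfl, if_neg hnf, add_zero]
    · have hyf : y = fl c₁ x := by
        funext i
        by_cases hi : i = c₁
        · subst hi; rw [fl_apply_self]; exact fin2_flip_eq hc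
        · rw [fl_apply_ne _ _ hi]; exact (h i hi).symm
      have hnx : ¬ y = x := fun hyx => hc (by rw [hyx])
      rw [if_neg hc, if_pos hyf, if_neg hnx, zero_add]
  · rw [if_neg h]
    have h1 : ¬ y = x := fun hy => h (fun i _ => by rw [hy])
    have h2 : ¬ y = fl c₁ x := fun hy => h (fun i hi => by rw [hy, fl_apply_ne _ _ hi])
    rw [if_neg h1, if_neg h2, add_zero]

lemma final_scalar (q m NN : ℕ) (sc P P' : ℂ)
    (hrel : P' * Complex.I ^ q = P * Complex.I ^ (q * q)) :
    (-1) * sc * ((((1 + Complex.I) * sc) ^ m * Complex.I ^ q) * (sc ^ NN * P))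
      + Complex.I * sc * ((((1 + Complex.I) * sc) ^ m * Complex.I ^ q)
          * (sc ^ NN * (P * (-1) ^ q)))
    = (((1 + Complex.I) * sc) ^ m * ((-1 + Complex.I) * sc))
        * ((-1 : ℂ) ^ q * (sc ^ NN * P')) := by
  have hI : (Complex.I : ℂ) ^ q ≠ 0 := pow_ne_zero _ Complex.I_ne_zero
  apply mul_right_cancel₀ hI
  have h2 : Complex.I ^ q * Complex.I ^ q = (-1 : ℂ) ^ q := by
    rw [← pow_add, ← two_mul, pow_mul, Complex.I_sq]
  have hkey : (-1 : ℂ) + Complex.I * (-1 : ℂ) ^ q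
      = (-1 + Complex.I) * Complex.I ^ (q * q) := by
    rcases Nat.even_or_odd q with ⟨k, hk⟩ | ⟨k, hk⟩
    · subst hk
      have e1 : (-1 : ℂ) ^ (k + k) = 1 := Even.neg_one_pow ⟨k, rfl⟩
      have e2 : Complex.I ^ ((k + k) * (k + k)) = 1 := by
        rw [show (k + k) * (k + k) = 4 * (k * k) from by ring, pow_mul, Complex.I_pow_four,
          one_pow]
      rw [e1, e2]
      ring
    · subst hk
      have e1 : (-1 : ℂ) ^ (2 * k + 1) = -1 := Odd.neg_one_pow ⟨k, rfl⟩
      have e2 : Complex.I ^ ((2 * k + 1) * (2 * k + 1)) = Complex.I := by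
        rw [show (2 * k + 1) * (2 * k + 1) = 4 * (k * k + k) + 1 from by ring, pow_add,
          pow_mul, Complex.I_pow_four, one_pow, pow_one, one_mul]
      rw [e1, e2]
      linear_combination (-1 : ℂ) * Complex.I_sq
  linear_combination
    (-(((1 + Complex.I) * sc) ^ m) * (-1 + Complex.I) * sc * ((-1 : ℂ) ^ q) * (sc ^ NN)) * hrel
    + (sc * (((1 + Complex.I) * sc) ^ m) * (sc ^ NN) * P
        * ((-1) + Complex.I * (-1 : ℂ) ^ q)) * h2
    + (sc * (((1 + Complex.I) * sc) ^ m) * (sc ^ NN) * P * ((-1 : ℂ) ^ q)) * hkey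

end LCH

open LCH in
/-- the local Clifford operator
`LC(c₁) = √(−iX_{c₁}) ∏_{j} √(iZ_{b_j})` (product over the neighbors of `c₁`,
where `√(iZ_b)` is the diagonal gate with entries `(i + (−1)^{x_b})/√2`) maps
`|G⟩` to, up to a global phase, `(∏_j Z_{b_j}) |G'⟩`, where `G'` is the local
complement of `G` at `c₁`. -/
theorem lc_clifford_action {V : Type*} [Fintype V] [DecidableEq V]
    (G : SimpleGraph V) [DecidableRel G.Adj] (c₁ : V) :
    ∃ φ : ℂ, ‖φ‖ = 1 ∧
      (sqrtNegIXGate c₁ *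
          Matrix.diagonal (fun x : V → Fin 2 => ∏ b ∈ G.neighborFinset c₁,
            ((Complex.I + (-1 : ℂ) ^ ((x b).val)) * ((1 / Real.sqrt 2 : ℝ) : ℂ)))).mulVec
        (gs G)
      = φ • (Matrix.diagonal (fun x : V → Fin 2 => ∏ b ∈ G.neighborFinset c₁,
            (-1 : ℂ) ^ ((x b).val))).mulVec (gs (lc G c₁)) := by
  classical
  refine ⟨((1 + Complex.I) * ((1 / Real.sqrt 2 : ℝ) : ℂ)) ^ ((G.neighborFinset c₁).card)
    * ((-1 + Complex.I) * ((1 / Real.sqrt 2 : ℝ) : ℂ)), ?_, ?_⟩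
  · have hs2 : Real.sqrt 2 ≠ 0 := by positivity
    have h1 : ‖(1 : ℂ) + Complex.I‖ = Real.sqrt 2 := by
      rw [Complex.norm_def, Complex.normSq_apply]
      simp
      norm_num
    have h2 : ‖(-1 : ℂ) + Complex.I‖ = Real.sqrt 2 := by
      rw [Complex.norm_def, Complex.normSq_apply]
      simp
      norm_num
    have h3 : ‖(((1 / Real.sqrt 2 : ℝ) : ℂ))‖ = (Real.sqrt 2)⁻¹ := by
      rw [Complex.norm_real, Real.norm_eq_abs, abs_of_nonneg (by positivity), one_div]
    simp only [norm_mul, norm_pow, h1, h2, h3]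
    rw [mul_inv_cancel₀ hs2, one_pow, one_mul]
  · funext x
    have hL : ((sqrtNegIXGate c₁ *
        Matrix.diagonal (fun x : V → Fin 2 => ∏ b ∈ G.neighborFinset c₁,
          ((Complex.I + (-1 : ℂ) ^ ((x b).val)) * ((1 / Real.sqrt 2 : ℝ) : ℂ)))).mulVec
        (gs G)) x
        = (-1 : ℂ) * ((1 / Real.sqrt 2 : ℝ) : ℂ)
            * ((∏ b ∈ G.neighborFinset c₁,
                ((Complex.I + (-1 : ℂ) ^ ((x b).val)) * ((1 / Real.sqrt 2 : ℝ) : ℂ)))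
              * gs G x)
          + Complex.I * ((1 / Real.sqrt 2 : ℝ) : ℂ)
            * ((∏ b ∈ G.neighborFinset c₁,
                ((Complex.I + (-1 : ℂ) ^ (((fl c₁ x) b).val)) * ((1 / Real.sqrt 2 : ℝ) : ℂ)))
              * gs G (fl c₁ x)) := by
      simp only [Matrix.mulVec, dotProduct, Matrix.mul_diagonal]
      have hsummand : ∀ y : V → Fin 2,
          sqrtNegIXGate c₁ x y * (∏ b ∈ G.neighborFinset c₁,
              ((Complex.I + (-1 : ℂ) ^ ((y b).val)) * ((1 / Real.sqrt 2 : ℝ) : ℂ))) * gs G y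
          = (if y = x then (-1 : ℂ) * ((1 / Real.sqrt 2 : ℝ) : ℂ)
                * ((∏ b ∈ G.neighborFinset c₁,
                    ((Complex.I + (-1 : ℂ) ^ ((y b).val)) * ((1 / Real.sqrt 2 : ℝ) : ℂ)))
                  * gs G y) else 0)
            + (if y = fl c₁ x then Complex.I * ((1 / Real.sqrt 2 : ℝ) : ℂ)
                * ((∏ b ∈ G.neighborFinset c₁,
                    ((Complex.I + (-1 : ℂ) ^ ((y b).val)) * ((1 / Real.sqrt 2 : ℝ) : ℂ)))
                  * gs G y) else 0) := by
        intro y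
        rw [gate_row c₁ x y]
        split_ifs <;> ring
      rw [Finset.sum_congr rfl (fun y _ => hsummand y), Finset.sum_add_distrib,
        Finset.sum_ite_eq' Finset.univ x, Finset.sum_ite_eq' Finset.univ (fl c₁ x)]
      simp only [Finset.mem_univ, if_pos]
    rw [hL]
    have hR : ((((1 + Complex.I) * ((1 / Real.sqrt 2 : ℝ) : ℂ)) ^ ((G.neighborFinset c₁).card)
        * ((-1 + Complex.I) * ((1 / Real.sqrt 2 : ℝ) : ℂ))) •
        (Matrix.diagonal (fun x : V → Fin 2 => ∏ b ∈ G.neighborFinset c₁,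
            (-1 : ℂ) ^ ((x b).val))).mulVec (gs (lc G c₁))) x
        = (((1 + Complex.I) * ((1 / Real.sqrt 2 : ℝ) : ℂ)) ^ ((G.neighborFinset c₁).card)
            * ((-1 + Complex.I) * ((1 / Real.sqrt 2 : ℝ) : ℂ)))
          * ((-1 : ℂ) ^ (nn G c₁ x) * gs (lc G c₁) x) := by
      rw [Pi.smul_apply, Matrix.mulVec_diagonal, smul_eq_mul]
      rw [Finset.prod_pow_eq_pow_sum]
      rfl
    rw [hR]
    rw [prod_d G c₁ x, prod_d G c₁ (fl c₁ x), nn_fl]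
    rw [show gs G (fl c₁ x) = ((1 / Real.sqrt 2 : ℝ) : ℂ) ^ (Fintype.card V)
        * (((-1 : ℂ)) ^ phasePoly G x * (-1 : ℂ) ^ (nn G c₁ x)) by
      rw [gs, key_flip]]
    rw [show gs G x = ((1 / Real.sqrt 2 : ℝ) : ℂ) ^ (Fintype.card V)
        * ((-1 : ℂ)) ^ phasePoly G x from rfl]
    rw [show gs (lc G c₁) x = ((1 / Real.sqrt 2 : ℝ) : ℂ) ^ (Fintype.card V)
        * ((-1 : ℂ)) ^ phasePoly (lc G c₁) x from rfl]
    exact final_scalar (nn G c₁ x) ((G.neighborFinset c₁).card) (Fintype.card V)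
      (((1 / Real.sqrt 2 : ℝ) : ℂ)) (((-1 : ℂ)) ^ phasePoly G x)
      (((-1 : ℂ)) ^ phasePoly (lc G c₁) x) (key_lc G c₁ x)
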